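/- arXiv:2110.06850 — 9 statements merged into one kernel-verified Lean document; each statement's English description precedes it below -/
import Mathlib

section
/- Let g : ℝ^d → ℝ^K (K ≥ 2) satisfy ‖g(x) − g(x')‖∞ ≤ ‖x − x'‖∞ for all x, x', let θ > 0, and let D = {(x_i, y_i)}_{i=1}^n be a finite labeled dataset with y_i ∈ [K]. If the hinge loss L_hinge(g, D; θ) = (1/n) Σ_{i=1}^n max{θ − margin(x_i, y_i; g), 0} equals 0, then for every i ∈ [n], every δ ∈ ℝ^d with ‖δ‖∞ < θ/2, and every j ≠ y_i, one has g(x_i+δ)_{y_i} > g(x_i+δ)_j; i.e. zero hinge loss implies the network robustly classifies every training point under all ℓ∞-perturbations of size strictly less than θ/2. -/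
/-- Zero hinge loss implies perfect certified robustness: if `g` is 1-Lipschitz w.r.t. the
ℓ∞-norm and the hinge loss `(1/n) Σᵢ max{θ - margin(xᵢ, yᵢ; g), 0}` equals `0`, then every
training point is robustly classified under all ℓ∞-perturbations of size `< θ/2`. -/
theorem zero_hinge_loss_certified_robustness
    (d K n : ℕ) (hK : 2 ≤ K) (hn : 1 ≤ n)
    (g : (Fin d → ℝ) → (Fin K → ℝ))
    (hg : ∀ x x' : Fin d → ℝ, ‖g x - g x'‖ ≤ ‖x - x'‖)
    (θ : ℝ) (hθ : 0 < θ)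
    (x : Fin n → (Fin d → ℝ)) (y : Fin n → Fin K)
    (hne : ∀ i : Fin n, ((Finset.univ : Finset (Fin K)).erase (y i)).Nonempty)
    (hloss : (1 / (n : ℝ)) * ∑ i : Fin n,
        max (θ - (g (x i) (y i) -
          ((Finset.univ : Finset (Fin K)).erase (y i)).sup' (hne i) (g (x i)))) 0 = 0) :
    ∀ i : Fin n, ∀ δ : Fin d → ℝ, ‖δ‖ < θ / 2 → ∀ j : Fin K, j ≠ y i →
      g (x i + δ) (y i) > g (x i + δ) j := by
  intro i δ hδ j hj
  -- sum is zero
  have hnpos : (0:ℝ) < n := by exact_mod_cast hn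
  have hsum : ∑ i : Fin n,
      max (θ - (g (x i) (y i) -
        ((Finset.univ : Finset (Fin K)).erase (y i)).sup' (hne i) (g (x i)))) 0 = 0 := by
    rcases mul_eq_zero.mp hloss with h | h
    · exact absurd h (by positivity)
    · exact h
  have hterm : max (θ - (g (x i) (y i) -
      ((Finset.univ : Finset (Fin K)).erase (y i)).sup' (hne i) (g (x i)))) 0 = 0 := by
    have := (Finset.sum_eq_zero_iff_of_nonneg (fun k _ => le_max_right _ _)).mp hsum i
      (Finset.mem_univ i)
    exact this
  have hmargin : θ ≤ g (x i) (y i) -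
      ((Finset.univ : Finset (Fin K)).erase (y i)).sup' (hne i) (g (x i)) := by
    by_contra h
    push_neg at h
    have : 0 < max (θ - (g (x i) (y i) -
        ((Finset.univ : Finset (Fin K)).erase (y i)).sup' (hne i) (g (x i)))) 0 :=
      lt_max_of_lt_left (by linarith)
    linarith [hterm ▸ this]
  have hj' : g (x i) j ≤ ((Finset.univ : Finset (Fin K)).erase (y i)).sup' (hne i) (g (x i)) :=
    Finset.le_sup' _ (Finset.mem_erase.mpr ⟨hj, Finset.mem_univ j⟩)
  -- Lipschitz bounds on coordinates
  have hlip : ∀ k : Fin K, |g (x i + δ) k - g (x i) k| < θ / 2 := by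
    intro k
    have h1 : ‖g (x i + δ) - g (x i)‖ ≤ ‖(x i + δ) - x i‖ := hg _ _
    have h2 : (x i + δ) - x i = δ := by abel
    have h3 : |g (x i + δ) k - g (x i) k| ≤ ‖g (x i + δ) - g (x i)‖ := by
      have := norm_le_pi_norm (g (x i + δ) - g (x i)) k
      simpa [Real.norm_eq_abs] using this
    rw [h2] at h1
    linarith
  have hy := hlip (y i)
  have hjj := hlip j
  rw [abs_lt] at hy hjj
  have hxy : θ ≤ g (x i) (y i) - g (x i) j := by linarith
  linarith
end

section
/- Let p ∈ [1, ∞), d ≥ 1, L ≥ 1, and let g = F_L ∘ ⋯ ∘ F_1 : ℝ^{n_0} → ℝ^{n_L} where each F_l : ℝ^{n_{l−1}} → ℝ^{n_l} is an ℓp-distance layer F_l(z)_i = ‖z − w^(l,i)‖_p + b^(l)_i, and suppose the input dimension of every layer satisfies n_{l−1} ≤ d for all l ∈ [L]. Then g is d^{L/p}-Lipschitz with respect to the ℓ∞-norm: for all x, x' ∈ ℝ^{n_0}, ‖g(x) − g(x')‖∞ ≤ d^{L/p} ‖x − x'‖∞. -/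
open Finset

lemma lp_sub_le {p : ℝ} (hp : 1 ≤ p) {n : ℕ} (a b : Fin n → ℝ) :
    |(∑ k, |a k| ^ p) ^ (1 / p) - (∑ k, |b k| ^ p) ^ (1 / p)| ≤
      (∑ k, |a k - b k| ^ p) ^ (1 / p) := by
  have key : ∀ u v : Fin n → ℝ,
      (∑ k, |u k| ^ p) ^ (1 / p) ≤ (∑ k, |v k| ^ p) ^ (1 / p) + (∑ k, |u k - v k| ^ p) ^ (1 / p) := by
    intro u v
    have := Real.Lp_add_le Finset.univ v (fun k => u k - v k) hp
    simpa using this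
  rw [abs_sub_le_iff]
  constructor
  · have := key a b; linarith [this]
  · have := key b a
    have h2 : (∑ k, |b k - a k| ^ p) = (∑ k, |a k - b k| ^ p) := by
      apply Finset.sum_congr rfl; intro k _; rw [abs_sub_comm]
    rw [h2] at this; linarith

lemma lp_le_card_rpow_norm {p : ℝ} (hp : 1 ≤ p) {n : ℕ} (c : Fin n → ℝ) :
    (∑ k, |c k| ^ p) ^ (1 / p) ≤ (n : ℝ) ^ (1 / p) * ‖c‖ := by
  have hp0 : 0 < p := lt_of_lt_of_le one_pos hp
  have hnorm : (0 : ℝ) ≤ ‖c‖ := norm_nonneg c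
  have hsum : (∑ k, |c k| ^ p) ≤ (n : ℝ) * ‖c‖ ^ p := by
    calc (∑ k, |c k| ^ p) ≤ ∑ _k : Fin n, ‖c‖ ^ p := by
          apply Finset.sum_le_sum
          intro k _
          exact Real.rpow_le_rpow (abs_nonneg _) (norm_le_pi_norm c k) hp0.le
      _ = (n : ℝ) * ‖c‖ ^ p := by simp [mul_comm]
  have h1 : (∑ k, |c k| ^ p) ^ (1 / p) ≤ ((n : ℝ) * ‖c‖ ^ p) ^ (1 / p) :=
    Real.rpow_le_rpow (Finset.sum_nonneg fun k _ => Real.rpow_nonneg (abs_nonneg _) p) hsum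
      (by positivity)
  calc (∑ k, |c k| ^ p) ^ (1 / p) ≤ ((n : ℝ) * ‖c‖ ^ p) ^ (1 / p) := h1
    _ = (n : ℝ) ^ (1 / p) * (‖c‖ ^ p) ^ (1 / p) :=
        Real.mul_rpow (by positivity) (Real.rpow_nonneg hnorm p)
    _ = (n : ℝ) ^ (1 / p) * ‖c‖ := by
        rw [← Real.rpow_mul hnorm, mul_one_div, div_self hp0.ne', Real.rpow_one]

/-- One layer is `d^(1/p)`-Lipschitz in the sup norm. -/
lemma layer_lip {p : ℝ} (hp : 1 ≤ p) {d m n : ℕ} (hn : n ≤ d)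
    (w : Fin m → Fin n → ℝ) (b : Fin m → ℝ) (z z' : Fin n → ℝ) :
    ‖(fun i => (∑ k, |z k - w i k| ^ p) ^ (1 / p) + b i) -
      (fun i => (∑ k, |z' k - w i k| ^ p) ^ (1 / p) + b i)‖ ≤
      (d : ℝ) ^ (1 / p) * ‖z - z'‖ := by
  have hp0 : 0 < p := lt_of_lt_of_le one_pos hp
  have hC : (0 : ℝ) ≤ (d : ℝ) ^ (1 / p) * ‖z - z'‖ := by positivity
  rw [pi_norm_le_iff_of_nonneg hC]
  intro i
  simp only [Pi.sub_apply]
  have h1 : |((∑ k, |z k - w i k| ^ p) ^ (1 / p) + b i) -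
      ((∑ k, |z' k - w i k| ^ p) ^ (1 / p) + b i)| ≤
      (∑ k, |(z k - w i k) - (z' k - w i k)| ^ p) ^ (1 / p) := by
    have := lp_sub_le hp (fun k => z k - w i k) (fun k => z' k - w i k)
    simpa using this
  have h2 : (∑ k, |(z k - w i k) - (z' k - w i k)| ^ p) ^ (1 / p) ≤
      (n : ℝ) ^ (1 / p) * ‖z - z'‖ := by
    have := lp_le_card_rpow_norm hp (z - z')
    simpa [sub_sub_sub_cancel_right] using this
  have h3 : ((n : ℝ)) ^ (1 / p) * ‖z - z'‖ ≤ (d : ℝ) ^ (1 / p) * ‖z - z'‖ := by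
    apply mul_le_mul_of_nonneg_right _ (norm_nonneg _)
    exact Real.rpow_le_rpow (Nat.cast_nonneg n) (Nat.cast_le.mpr hn) (by positivity)
  calc ‖((∑ k, |z k - w i k| ^ p) ^ (1 / p) + b i) -
      ((∑ k, |z' k - w i k| ^ p) ^ (1 / p) + b i)‖ ≤ _ := h1
    _ ≤ _ := h2
    _ ≤ _ := h3

/-- The composition of the first `L` layers of a network: `netComp n F L = F_{L-1} ∘ ⋯ ∘ F_0`,
where layer `F_l` maps `ℝ^{n l}` to `ℝ^{n (l+1)}`. -/
def netComp (n : ℕ → ℕ) (F : ∀ l : ℕ, (Fin (n l) → ℝ) → (Fin (n (l + 1)) → ℝ)) :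
    (L : ℕ) → (Fin (n 0) → ℝ) → (Fin (n L) → ℝ)
  | 0 => id
  | (L + 1) => fun x => F L (netComp n F L x)

/-- Proposition 2 (net part): an `L`-layer ℓp-distance net `g = F_L ∘ ⋯ ∘ F_1`, where each
layer `F_l(z)_i = ‖z - w^(l,i)‖_p + b^(l)_i` (with `‖z‖_p = (Σ_k |z_k|^p)^(1/p)`) has input
dimension at most `d`, is `d^(L/p)`-Lipschitz with respect to the ℓ∞-norm. -/
theorem lp_dist_net_lipschitz
    (p : ℝ) (hp : 1 ≤ p)
    (d : ℕ) (hd : 1 ≤ d)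
    (L : ℕ) (hL : 1 ≤ L)
    (n : ℕ → ℕ) (hdim : ∀ l, l < L → n l ≤ d)
    (F : ∀ l : ℕ, (Fin (n l) → ℝ) → (Fin (n (l + 1)) → ℝ))
    (hF : ∀ l, l < L → ∃ (w : Fin (n (l + 1)) → (Fin (n l) → ℝ)) (b : Fin (n (l + 1)) → ℝ),
        ∀ (z : Fin (n l) → ℝ) (i : Fin (n (l + 1))),
          F l z i = (∑ k : Fin (n l), |z k - w i k| ^ p) ^ (1 / p) + b i) :
    ∀ x x' : Fin (n 0) → ℝ,
      ‖netComp n F L x - netComp n F L x'‖ ≤ (d : ℝ) ^ ((L : ℝ) / p) * ‖x - x'‖ := by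
  have hp0 : 0 < p := lt_of_lt_of_le one_pos hp
  clear hL
  induction L with
  | zero =>
    intro x x'
    simp [netComp, Real.rpow_zero]
  | succ L ih =>
    intro x x'
    have ihL := ih (fun l hl => hdim l (Nat.lt_succ_of_lt hl))
      (fun l hl => hF l (Nat.lt_succ_of_lt hl)) x x'
    obtain ⟨w, b, hwb⟩ := hF L (Nat.lt_succ_self L)
    have hstep := layer_lip hp (hdim L (Nat.lt_succ_self L)) w b
      (netComp n F L x) (netComp n F L x')
    have heq : (netComp n F (L + 1) x - netComp n F (L + 1) x') =
        ((fun i => (∑ k, |netComp n F L x k - w i k| ^ p) ^ (1 / p) + b i) -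
         (fun i => (∑ k, |netComp n F L x' k - w i k| ^ p) ^ (1 / p) + b i)) := by
      funext i
      simp [netComp, hwb]
    rw [heq]
    calc ‖_ - _‖ ≤ (d : ℝ) ^ (1 / p) * ‖netComp n F L x - netComp n F L x'‖ := hstep
      _ ≤ (d : ℝ) ^ (1 / p) * ((d : ℝ) ^ ((L : ℝ) / p) * ‖x - x'‖) := by
          apply mul_le_mul_of_nonneg_left ihL (by positivity)
      _ = (d : ℝ) ^ (((L : ℕ) + 1 : ℝ) / p) * ‖x - x'‖ := by
          rw [← mul_assoc, ← Real.rpow_add (by exact_mod_cast hd)]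
          ring_nf
      _ = (d : ℝ) ^ (((L + 1 : ℕ) : ℝ) / p) * ‖x - x'‖ := by push_cast; ring_nf
end

section
/- Let r ≥ 0, let f : ℝ^d → [K] be any classifier, and let D = {(x_i, y_i)}_{i=1}^n be a labeled dataset with y_i ∈ [K] such that f is robustly correct on D at level r, i.e. for every i ∈ [n] and every δ ∈ ℝ^d with ‖δ‖∞ ≤ r one has f(x_i + δ) = y_i. Then D is r-separated with respect to the ℓ∞-norm: for all i, j ∈ [n] with y_i ≠ y_j, ‖x_i − x_j‖∞ > 2r. -/
/-- r-separation is a necessary condition for robustness: if a classifier `f` is robustly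
correct on the dataset at level `r` (i.e. `f(xᵢ + δ) = yᵢ` for all `‖δ‖∞ ≤ r`), then the
dataset is r-separated w.r.t. the ℓ∞-norm: `‖xᵢ - xⱼ‖∞ > 2r` whenever `yᵢ ≠ yⱼ`. -/
theorem robustness_implies_r_separation
    (d K n : ℕ) (r : ℝ) (hr : 0 ≤ r)
    (f : (Fin d → ℝ) → Fin K)
    (x : Fin n → (Fin d → ℝ)) (y : Fin n → Fin K)
    (hrob : ∀ i : Fin n, ∀ δ : Fin d → ℝ, ‖δ‖ ≤ r → f (x i + δ) = y i) :
    ∀ i j : Fin n, y i ≠ y j → ‖x i - x j‖ > 2 * r := by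
  intro i j hy
  by_contra h
  push_neg at h
  set δ : Fin d → ℝ := (x j - x i) / 2 with hδ
  have hnorm : ‖δ‖ ≤ r := by
    have : ‖δ‖ = ‖x j - x i‖ / 2 := by
      rw [hδ]
      rw [show (x j - x i) / 2 = (2:ℝ)⁻¹ • (x j - x i) by
        ext k; simp [div_eq_inv_mul]]
      rw [norm_smul]
      simp [norm_inv, div_eq_inv_mul]
    rw [this]
    rw [norm_sub_rev]
    linarith
  have h1 : f (x i + δ) = y i := hrob i δ hnorm
  have h2 : f (x j + (-δ)) = y j := by
    apply hrob j
    rw [norm_neg]; exact hnorm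
  have heq : x i + δ = x j + (-δ) := by
    ext k
    simp [hδ]
    ring
  rw [heq, h2] at h1
  exact hy h1.symm
end

section
/- Let x_1, …, x_n ∈ ℝ^d with labels y_1, …, y_n ∈ [K], let C > 0, and define the two-layer ℓ∞-distance net g : ℝ^d → ℝ^K with first-layer parameters w^(1,i) = x_i, b^(1) = 0 and second-layer parameters w^(2,j)_i = C·𝟙[y_i = j], b^(2)_j = −C, i.e. g(x)_j = max_{i∈[n]} | ‖x − x_i‖∞ − C·𝟙[y_i = j] | − C. Then for every label j ∈ [K] for which some sample has y_i = j, and every x ∈ ℝ^d satisfying ‖x − x_i‖∞ ≤ C/2 for all i ∈ [n], one has g(x)_j = − min_{i : y_i = j} ‖x − x_i‖∞. -/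
/-- Equation (6) of the paper: the explicitly constructed two-layer ℓ∞-distance net
`g(x)_j = max_{i∈[n]} | ‖x - xᵢ‖∞ - C·𝟙[yᵢ = j] | - C` outputs the negative
nearest-neighbor ℓ∞-distance to class `j`, for every `x` with `‖x - xᵢ‖∞ ≤ C/2` for all `i`
and every label `j` attained by some sample. -/
theorem two_layer_net_is_nearest_neighbor
    (d K n : ℕ) (hn : 1 ≤ n)
    (x : Fin n → (Fin d → ℝ)) (y : Fin n → Fin K)
    (C : ℝ) (hC : 0 < C)
    (g : (Fin d → ℝ) → (Fin K → ℝ))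
    (hg : ∀ (z : Fin d → ℝ) (j : Fin K),
        g z j = (Finset.univ : Finset (Fin n)).sup' ⟨⟨0, hn⟩, Finset.mem_univ _⟩
          (fun i => |‖z - x i‖ - (if y i = j then C else 0)|) - C) :
    ∀ j : Fin K, (∃ i : Fin n, y i = j) →
      ∀ z : Fin d → ℝ, (∀ i : Fin n, ‖z - x i‖ ≤ C / 2) →
        g z j = -(⨅ i : {i : Fin n // y i = j}, ‖z - x i.1‖) := by
  intro j hj z hz
  obtain ⟨i₀, hi₀⟩ := hj
  haveI : Nonempty {i : Fin n // y i = j} := ⟨⟨i₀, hi₀⟩⟩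
  set m : ℝ := ⨅ i : {i : Fin n // y i = j}, ‖z - x i.1‖ with hm
  have hmin : m = Finset.univ.inf' Finset.univ_nonempty
      (fun i : {i : Fin n // y i = j} => ‖z - x i.1‖) :=
    (Finset.inf'_univ_eq_ciInf _).symm
  have hmle : ∀ i : Fin n, y i = j → m ≤ ‖z - x i‖ := by
    intro i hi
    rw [hmin]
    exact Finset.inf'_le _ (Finset.mem_univ (⟨i, hi⟩ : {i : Fin n // y i = j}))
  have hmC : m ≤ C / 2 := (hmle i₀ hi₀).trans (hz i₀)
  have hnn : 0 ≤ m := by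
    rw [hmin]
    exact Finset.le_inf' _ _ fun i _ => norm_nonneg _
  rw [hg]
  have hsup : (Finset.univ : Finset (Fin n)).sup' ⟨⟨0, hn⟩, Finset.mem_univ _⟩
      (fun i => |‖z - x i‖ - (if y i = j then C else 0)|) = C - m := by
    apply le_antisymm
    · apply Finset.sup'_le
      intro i _
      by_cases h : y i = j
      · simp only [h, if_pos]
        rw [abs_of_nonpos (by linarith [hz i])]
        linarith [hmle i h]
      · simp only [h, if_neg, not_false_iff, sub_zero]
        rw [abs_of_nonneg (norm_nonneg _)]
        linarith [hz i]
    · obtain ⟨i₁, _, hi₁⟩ := Finset.exists_mem_eq_inf' (Finset.univ_nonempty)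
        (fun i : {i : Fin n // y i = j} => ‖z - x i.1‖)
      have : C - m = |‖z - x i₁.1‖ - (if y i₁.1 = j then C else 0)| := by
        rw [hmin, hi₁, i₁.2, if_pos rfl, abs_of_nonpos (by linarith [hz i₁.1])]
        ring
      rw [this]
      exact Finset.le_sup' (fun i => |‖z - x i‖ - (if y i = j then C else 0)|) (Finset.mem_univ i₁.1)
  rw [hsup]; ring
end

section
/- Let r ≥ 0, K ≥ 1, and let D = {(x_i, y_i)}_{i=1}^n (n ≥ 1, x_i ∈ ℝ^d, y_i ∈ [K]) be r-separated with respect to the ℓ∞-norm, with every label in [K] attained by some sample. Then there exist first-layer parameters w^(1,1), …, w^(1,n) ∈ ℝ^d, b^(1) ∈ ℝ^n and second-layer parameters w^(2,1), …, w^(2,K) ∈ ℝ^n, b^(2) ∈ ℝ^K such that the two-layer ℓ∞-distance net g : ℝ^d → ℝ^K with hidden width n, g(x)_j = ‖(‖x − w^(1,i)‖∞ + b^(1)_i)_{i∈[n]} − w^(2,j)‖∞ + b^(2)_j, satisfies: for every k ∈ [n], every δ ∈ ℝ^d with ‖δ‖∞ ≤ r, and every j ≠ y_k, g(x_k + δ)_{y_k}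 > g(x_k + δ)_j. In particular such a net achieves 100% certified ℓ∞ robust accuracy on D under perturbation level ε = r. -/
/-- Theorem 1 of the paper: for any r-separated dataset (w.r.t. ℓ∞), there exists a two-layer
ℓ∞-distance net `g(x)_j = ‖(‖x - w^(1,i)‖∞ + b^(1)_i)_{i∈[n]} - w^(2,j)‖∞ + b^(2)_j` with
hidden width `n` that achieves 100% certified ℓ∞ robust accuracy on the dataset at
perturbation level `ε = r`: for every sample `k`, every `δ` with `‖δ‖∞ ≤ r`, and every label
`j ≠ y_k`, the net outputs `g(x_k + δ)_{y_k} > g(x_k + δ)_j`. -/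
theorem exists_two_layer_linf_net_certified_robust
    (d K n : ℕ) (hn : 1 ≤ n) (hK : 1 ≤ K)
    (r : ℝ) (hr : 0 ≤ r)
    (x : Fin n → (Fin d → ℝ)) (y : Fin n → Fin K)
    (hsep : ∀ i j : Fin n, y i ≠ y j → ‖x i - x j‖ > 2 * r)
    (hsurj : ∀ j : Fin K, ∃ i : Fin n, y i = j) :
    ∃ (w1 : Fin n → (Fin d → ℝ)) (b1 : Fin n → ℝ)
      (w2 : Fin K → (Fin n → ℝ)) (b2 : Fin K → ℝ),
      ∀ k : Fin n, ∀ δ : Fin d → ℝ, ‖δ‖ ≤ r → ∀ j : Fin K, j ≠ y k →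
        ‖(fun i => ‖(x k + δ) - w1 i‖ + b1 i) - w2 (y k)‖ + b2 (y k) >
        ‖(fun i => ‖(x k + δ) - w1 i‖ + b1 i) - w2 j‖ + b2 j := by
  have hne : (Finset.univ : Finset (Fin n × Fin n)).Nonempty := by
    have : Nonempty (Fin n) := ⟨⟨0, hn⟩⟩
    exact Finset.univ_nonempty
  set S : ℝ := Finset.univ.sup' hne (fun p : Fin n × Fin n => ‖x p.1 - x p.2‖) with hS
  have hS0 : 0 ≤ S :=
    le_trans (norm_nonneg (x ⟨0, hn⟩ - x ⟨0, hn⟩))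
      (Finset.le_sup' (fun p : Fin n × Fin n => ‖x p.1 - x p.2‖) (Finset.mem_univ ((⟨0, hn⟩ : Fin n), (⟨0, hn⟩ : Fin n))))
  set M : ℝ := S + r with hMdef
  have hM0 : 0 ≤ M := add_nonneg hS0 hr
  set C : ℝ := M + r + 1 with hCdef
  have hrM : r ≤ M := le_add_of_nonneg_left hS0
  have hMC : M < C - r := by simp only [hCdef]; linarith
  refine ⟨x, 0, fun j i => if y i = j then C else 0, 0, ?_⟩
  intro k δ hδ j hj
  simp only [Pi.zero_apply, add_zero, gt_iff_lt]
  set h : Fin n → ℝ := fun i => ‖(x k + δ) - x i‖ with hh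
  have hbound : ∀ i, h i ≤ M := by
    intro i
    have heq : (x k + δ) - x i = (x k - x i) + δ := by ring
    calc h i = ‖(x k - x i) + δ‖ := by rw [hh]; simp only; rw [heq]
      _ ≤ ‖x k - x i‖ + ‖δ‖ := norm_add_le _ _
      _ ≤ S + r := add_le_add (Finset.le_sup' (fun p : Fin n × Fin n => ‖x p.1 - x p.2‖) (Finset.mem_univ (k, i))) hδ
  have hhk : h k = ‖δ‖ := by
    have : (x k + δ) - x k = δ := by ring
    simp [hh, this]
  -- lower bound on correct-class output
  have hlow : C - r ≤ ‖(fun i => h i) - (fun i => if y i = y k then C else 0)‖ := by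
    have h1 : ‖((fun i => h i) - (fun i => if y i = y k then C else 0)) k‖
        ≤ ‖(fun i => h i) - (fun i => if y i = y k then C else 0)‖ :=
      norm_le_pi_norm _ k
    have h2 : ((fun i => h i) - (fun i => if y i = y k then C else 0)) k = h k - C := by
      simp [Pi.sub_apply]
    rw [h2] at h1
    have hkC : h k ≤ C := by
      have := hbound k
      linarith [hMC, hr]
    have : ‖h k - C‖ = C - h k := by
      rw [Real.norm_eq_abs, abs_of_nonpos (by linarith)]; ring
    rw [this] at h1
    have : h k ≤ r := by rw [hhk]; exact hδ
    linarith
  -- upper bound on wrong-class output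
  have hup : ‖(fun i => h i) - (fun i => if y i = j then C else 0)‖ < C - r := by
    rw [pi_norm_lt_iff (by linarith)]
    intro i
    simp only [Pi.sub_apply]
    by_cases hyi : y i = j
    · simp only [hyi, if_pos rfl, if_true]
      have hir : r < h i := by
        have hyk : y k ≠ y i := by rw [hyi]; exact hj.symm
        have hsp := hsep k i hyk
        have : ‖x k - x i‖ ≤ h i + ‖δ‖ := by
          have heq : x k - x i = ((x k + δ) - x i) - δ := by ring
          calc ‖x k - x i‖ = ‖((x k + δ) - x i) - δ‖ := by rw [heq]
            _ ≤ ‖(x k + δ) - x i‖ + ‖δ‖ := norm_sub_le _ _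
        linarith
      have hiC : h i ≤ C := by linarith [hbound i]
      rw [Real.norm_eq_abs, abs_of_nonpos (by linarith)]
      linarith
    · simp only [if_neg hyi, sub_zero]
      rw [Real.norm_eq_abs, abs_of_nonneg (norm_nonneg _)]
      exact lt_of_le_of_lt (hbound i) hMC
  calc ‖(fun i => h i) - (fun i => if y i = j then C else 0)‖ < C - r := hup
    _ ≤ ‖(fun i => h i) - (fun i => if y i = y k then C else 0)‖ := hlow
end

section
/- Let r ≥ 0 and let D = {(x_i, y_i)}_{i=1}^n (x_i ∈ ℝ^d, y_i ∈ [K]) be r-separated with respect to the ℓ∞-norm. Then for every k ∈ [n], every δ ∈ ℝ^d with ‖δ‖∞ ≤ r, and every label j ≠ y_k that is attained by some sample, one has min_{i : y_i = y_k} ‖(x_k + δ) − x_i‖∞ < min_{i : y_i = j} ‖(x_k + δ) − x_i‖∞; that is, the 1-nearest-neighbor classifier in the ℓ∞ metric classifies x_k + δ as y_k under every ℓ∞-perturbation of size at most r. -/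
/-- Robustness of the 1-nearest-neighbor ℓ∞ classifier on an r-separated dataset: for every
sample `k`, every perturbation `δ` with `‖δ‖∞ ≤ r`, and every label `j ≠ y_k` attained by some
sample, the nearest-neighbor distance of `x_k + δ` to class `y_k` is strictly smaller than its
nearest-neighbor distance to class `j`. -/
theorem nearest_neighbor_classifier_robust
    (d K n : ℕ) (r : ℝ) (hr : 0 ≤ r)
    (x : Fin n → (Fin d → ℝ)) (y : Fin n → Fin K)
    (hsep : ∀ i j : Fin n, y i ≠ y j → ‖x i - x j‖ > 2 * r) :
    ∀ k : Fin n, ∀ δ : Fin d → ℝ, ‖δ‖ ≤ r → ∀ j : Fin K, j ≠ y k →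
      (∃ i : Fin n, y i = j) →
      (⨅ i : {i : Fin n // y i = y k}, ‖(x k + δ) - x i.1‖) <
      (⨅ i : {i : Fin n // y i = j}, ‖(x k + δ) - x i.1‖) := by
  intro k δ hδ j hj ⟨i0, hi0⟩
  have hbdd1 : BddBelow (Set.range fun i : {i : Fin n // y i = y k} => ‖(x k + δ) - x i.1‖) :=
    (Set.finite_range _).bddBelow
  have hle : (⨅ i : {i : Fin n // y i = y k}, ‖(x k + δ) - x i.1‖) ≤ r := by
    calc (⨅ i : {i : Fin n // y i = y k}, ‖(x k + δ) - x i.1‖)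
        ≤ ‖(x k + δ) - x k‖ := ciInf_le hbdd1 ⟨k, rfl⟩
      _ = ‖δ‖ := by rw [add_sub_cancel_left]
      _ ≤ r := hδ
  have hne : Nonempty {i : Fin n // y i = j} := ⟨⟨i0, hi0⟩⟩
  have hgt : r < ⨅ i : {i : Fin n // y i = j}, ‖(x k + δ) - x i.1‖ := by
    have hmin : ∀ i : {i : Fin n // y i = j}, r < ‖(x k + δ) - x i.1‖ := by
      intro ⟨i, hi⟩
      have hyk : y k ≠ y i := by rw [hi]; exact hj.symm
      have h1 : ‖x k - x i‖ > 2 * r := hsep k i hyk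
      have h2 : ‖x k - x i‖ ≤ ‖(x k + δ) - x i‖ + ‖δ‖ := by
        have : x k - x i = ((x k + δ) - x i) + (-δ) := by ring
        rw [this]
        calc ‖((x k + δ) - x i) + (-δ)‖ ≤ ‖(x k + δ) - x i‖ + ‖-δ‖ := norm_add_le _ _
          _ = ‖(x k + δ) - x i‖ + ‖δ‖ := by rw [norm_neg]
      simp only
      linarith
    obtain ⟨i, hi⟩ := Finite.exists_min
      (fun i : {i : Fin n // y i = j} => ‖(x k + δ) - x i.1‖)
    have : (⨅ i : {i : Fin n // y i = j}, ‖(x k + δ) - x i.1‖) = ‖(x k + δ) - x i.1‖ :=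
      le_antisymm (ciInf_le ((Set.finite_range _).bddBelow) i) (le_ciInf hi)
    rw [this]
    exact hmin i
  linarith
end

section
/- Let m ≥ 1, j ∈ [m], C > 0, and z ∈ ℝ^m with ‖z‖∞ ≤ C/2. Define w ∈ ℝ^m by w_j = −C and w_k = 0 for all k ≠ j. Then ‖z − w‖∞ − C = z_j; that is, a single ℓ∞-distance neuron with these parameters and bias b = −C exactly implements the coordinate-selection map z ↦ z_j on the domain {z : ‖z‖∞ ≤ C/2}. -/
/-- Coordinate-fetching lemma (appendix of the paper): a single ℓ∞-distance neuron with
weight `w_j = -C`, `w_k = 0` for `k ≠ j`, and bias `-C` implements the coordinate-selection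
map `z ↦ z_j` on the domain `{z : ‖z‖∞ ≤ C/2}`. -/
theorem linf_neuron_fetches_coordinate
    (m : ℕ) (hm : 1 ≤ m) (j : Fin m)
    (C : ℝ) (hC : 0 < C)
    (z : Fin m → ℝ) (hz : ‖z‖ ≤ C / 2)
    (w : Fin m → ℝ) (hw : ∀ k : Fin m, w k = if k = j then -C else 0) :
    ‖z - w‖ - C = z j := by
  have hbound : ∀ k : Fin m, |z k| ≤ C / 2 := by
    intro k
    exact (norm_le_pi_norm z k).trans hz
  have hzj := abs_le.mp (hbound j)
  have key : ‖z - w‖ = z j + C := by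
    apply le_antisymm
    · apply pi_norm_le_iff_of_nonneg (by linarith [hzj.1]) |>.mpr
      intro k
      simp only [Pi.sub_apply, hw k]
      by_cases h : k = j
      · subst h
        rw [if_pos rfl, sub_neg_eq_add, Real.norm_eq_abs,
          abs_of_nonneg (by linarith [hzj.1])]
      · simp only [if_neg h, sub_zero]
        have := abs_le.mp (hbound k)
        rw [Real.norm_eq_abs]
        have := hbound k
        linarith [abs_le.mp (hbound k), hzj.1]
    · have := norm_le_pi_norm (z - w) j
      rw [Pi.sub_apply, hw j, if_pos rfl, sub_neg_eq_add, Real.norm_eq_abs] at this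
      calc z j + C = |z j + C| := (abs_of_nonneg (by linarith [hzj.1])).symm
        _ ≤ ‖z - w‖ := this
  rw [key]; ring
end

section
/- Let d ≥ 1, m ≥ 0, C > 0, and let x, a ∈ ℝ^d and v ∈ ℝ^m satisfy ‖x − a‖∞ ≤ C and ‖v‖∞ ≤ C. Define z ∈ ℝ^{2d+m} by z_k = x_k and z_{d+k} = x_k for k ∈ [d], and z_{2d+k} = v_k for k ∈ [m]; define w ∈ ℝ^{2d+m} by w_k = a_k − C, w_{d+k} = a_k + C for k ∈ [d], and w_{2d+k} = 0 for k ∈ [m]. Then ‖z − w‖∞ − C = ‖x − a‖∞; that is, a single ℓ∞-distance neuron with parameters w and bias −C computes the ℓ∞-distance ‖x − a‖∞ from a hidden vector containing two copies of x together with any bounded auxiliary coordinates v. -/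
/-- Distance-computation lemma (appendix of the paper): from a hidden vector `z` containing
two copies of `x` together with bounded auxiliary coordinates `v` (indexed by
`Fin d ⊕ Fin d ⊕ Fin m ≅ Fin (2d + m)`), a single ℓ∞-distance neuron with weights
`w_k = a_k - C` on the first copy, `w_{d+k} = a_k + C` on the second copy, `0` on the
auxiliary coordinates, and bias `-C` computes `‖x - a‖∞`, provided `‖x - a‖∞ ≤ C` and
`‖v‖∞ ≤ C`. -/
theorem linf_neuron_computes_distance
    (d m : ℕ) (hd : 1 ≤ d)
    (C : ℝ) (hC : 0 < C)
    (x a : Fin d → ℝ) (v : Fin m → ℝ)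
    (hxa : ‖x - a‖ ≤ C) (hv : ‖v‖ ≤ C)
    (z w : (Fin d ⊕ Fin d ⊕ Fin m) → ℝ)
    (hz1 : ∀ k : Fin d, z (Sum.inl k) = x k)
    (hz2 : ∀ k : Fin d, z (Sum.inr (Sum.inl k)) = x k)
    (hz3 : ∀ k : Fin m, z (Sum.inr (Sum.inr k)) = v k)
    (hw1 : ∀ k : Fin d, w (Sum.inl k) = a k - C)
    (hw2 : ∀ k : Fin d, w (Sum.inr (Sum.inl k)) = a k + C)
    (hw3 : ∀ k : Fin m, w (Sum.inr (Sum.inr k)) = 0) :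
    ‖z - w‖ - C = ‖x - a‖ := by
  have hne : Nonempty (Fin d) := ⟨⟨0, hd⟩⟩
  obtain ⟨k₀, hk₀⟩ := Finite.exists_max (fun k : Fin d => |x k - a k|)
  have hle : ∀ j : Fin d, |x j - a j| ≤ ‖x - a‖ := by
    intro j
    simpa [Real.norm_eq_abs] using norm_le_pi_norm (x - a) j
  have hmax : ‖x - a‖ = |x k₀ - a k₀| := by
    refine le_antisymm ?_ (hle k₀)
    rw [pi_norm_le_iff_of_nonneg (abs_nonneg _)]
    intro j
    simpa [Real.norm_eq_abs] using hk₀ j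
  have hub : ‖z - w‖ ≤ ‖x - a‖ + C := by
    rw [pi_norm_le_iff_of_nonneg (by positivity)]
    rintro (k | k | k)
    · have := hle k
      simp only [Pi.sub_apply, hz1, hw1, Real.norm_eq_abs]
      have : |x k - (a k - C)| ≤ |x k - a k| + C := by
        have := abs_add_le (x k - a k) C
        have h2 : x k - (a k - C) = (x k - a k) + C := by ring
        rw [h2]; simpa [abs_of_pos hC] using this
      linarith [hle k]
    · simp only [Pi.sub_apply, hz2, hw2, Real.norm_eq_abs]
      have : |x k - (a k + C)| ≤ |x k - a k| + C := by
        have := abs_sub (x k - a k) C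
        have h2 : x k - (a k + C) = (x k - a k) - C := by ring
        rw [h2]; simpa [abs_of_pos hC] using this
      linarith [hle k]
    · have hvk : |v k| ≤ C := by
        simpa [Real.norm_eq_abs] using (norm_le_pi_norm v k).trans hv
      simp only [Pi.sub_apply, hz3, hw3, Real.norm_eq_abs, sub_zero]
      linarith [norm_nonneg (x - a)]
  have hlb : ‖x - a‖ + C ≤ ‖z - w‖ := by
    rcases le_or_gt 0 (x k₀ - a k₀) with h | h
    · have h1 : ‖(z - w) (Sum.inl k₀)‖ ≤ ‖z - w‖ := norm_le_pi_norm _ _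
      have h2 : ‖(z - w) (Sum.inl k₀)‖ = ‖x - a‖ + C := by
        simp only [Pi.sub_apply, hz1, hw1, Real.norm_eq_abs]
        rw [hmax, abs_of_nonneg h]
        rw [abs_of_nonneg (by linarith)]
        ring
      linarith
    · have h1 : ‖(z - w) (Sum.inr (Sum.inl k₀))‖ ≤ ‖z - w‖ := norm_le_pi_norm _ _
      have h2 : ‖(z - w) (Sum.inr (Sum.inl k₀))‖ = ‖x - a‖ + C := by
        simp only [Pi.sub_apply, hz2, hw2, Real.norm_eq_abs]
        rw [hmax, abs_of_neg h]
        rw [abs_of_neg (by linarith)]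
        ring
      linarith
  linarith
end

section
/- Let C > 0, n ≥ 1, let u ∈ ℝ satisfy −C/2 ≤ u ≤ 0, let v ∈ ℝ^n satisfy 0 ≤ v_i ≤ C/2 for all i ∈ [n], and let S ⊆ [n]. Define c_i = |v_i − C| for i ∈ S and c_i = v_i for i ∉ S. Then max( |u + C|, max_{i∈[n]} c_i ) − C = max( {u} ∪ { −v_i : i ∈ S } ); that is, a single ℓ∞-distance neuron (with weight −C on the coordinate carrying u, weight C on coordinates indexed by S, weight 0 elsewhere, and bias −C) implements the prefix-update u ↦ max{u, max_{i∈S}(−v_i)}. -/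
/-- Merging-step lemma (appendix of the paper): with `-C/2 ≤ u ≤ 0`, `0 ≤ vᵢ ≤ C/2`, and
`cᵢ = |vᵢ - C|` for `i ∈ S`, `cᵢ = vᵢ` otherwise, a single ℓ∞-distance neuron computes
`max(|u + C|, max_{i∈[n]} cᵢ) - C = max({u} ∪ {-vᵢ : i ∈ S})`, i.e. the prefix-update
`u ↦ max{u, max_{i∈S}(-vᵢ)}`. -/
theorem linf_neuron_merging_step
    (C : ℝ) (hC : 0 < C)
    (n : ℕ) (hn : 1 ≤ n)
    (u : ℝ) (hu : -C / 2 ≤ u ∧ u ≤ 0)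
    (v : Fin n → ℝ) (hv : ∀ i : Fin n, 0 ≤ v i ∧ v i ≤ C / 2)
    (S : Finset (Fin n))
    (c : Fin n → ℝ)
    (hc : ∀ i : Fin n, c i = if i ∈ S then |v i - C| else v i) :
    max |u + C| ((Finset.univ : Finset (Fin n)).sup' ⟨⟨0, hn⟩, Finset.mem_univ _⟩ c) - C =
      (insert u (S.image (fun i => -v i))).max' (Finset.insert_nonempty _ _) := by
  obtain ⟨hu1, hu2⟩ := hu
  have huC : |u + C| = u + C := abs_of_nonneg (by linarith)
  have humem : u ≤ (insert u (S.image (fun i => -v i))).max' (Finset.insert_nonempty _ _) :=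
    Finset.le_max' _ u (Finset.mem_insert_self _ _)
  apply le_antisymm
  · rw [sub_le_iff_le_add]
    apply max_le
    · rw [huC]; linarith
    · apply Finset.sup'_le
      intro i _
      rw [hc i]
      by_cases hi : i ∈ S
      · simp only [hi, if_true]
        rw [abs_of_nonpos (by have := (hv i).2; linarith)]
        have h3 := Finset.le_max' (insert u (S.image (fun i => -v i))) ((fun i => -v i) i)
          (Finset.mem_insert_of_mem (Finset.mem_image_of_mem _ hi))
        simp only at h3
        linarith
      · simp only [hi, if_false]
        have := (hv i).2
        linarith
  · apply Finset.max'_le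
    intro y hy
    rcases Finset.mem_insert.mp hy with h | h
    · rw [h, huC]
      have h4 := le_max_left (u + C) ((Finset.univ : Finset (Fin n)).sup' ⟨⟨0, hn⟩, Finset.mem_univ _⟩ c)
      linarith
    · obtain ⟨i, hiS, hiy⟩ := Finset.mem_image.mp h
      have hci : c i = C - v i := by
        rw [hc i]; simp only [hiS, if_true]
        rw [abs_of_nonpos (by have := (hv i).2; linarith)]; ring
      have : c i ≤ ((Finset.univ : Finset (Fin n)).sup' ⟨⟨0, hn⟩, Finset.mem_univ _⟩ c) :=
        Finset.le_sup' c (Finset.mem_univ i)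
      have h2 : c i ≤ max |u + C| ((Finset.univ : Finset (Fin n)).sup' ⟨⟨0, hn⟩, Finset.mem_univ _⟩ c) :=
        le_trans this (le_max_right _ _)
      rw [← hiy]
      rw [hci] at h2
      linarith
end
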